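/- Let (R,m) be a one-dimensional Cohen–Macaulay local ring whose integral closure R̄ in Q(R) is a finite R-module, with conductor c = R :_{Q(R)} R̄, and assume every regular ideal has a principal reduction. Let ω be a canonical ideal of R and I a regular ideal. Then tr(I) = c if and only if I* ≅ c as R-modules, if and only if Iω ≅ c as R-modules. In particular tr(ω) = c if and only if ω² ≅ c. -/

import Mathlib

set_option synthInstance.maxHeartbeats 1000000
set_option maxHeartbeats 1000000

open nonZeroDivisors IsLocalRing

variable (R : Type*) [CommRing R]

/-- The trace ideal of an `R`-module `M`. -/
noncomputable def traceIdeal (M : Type*) [AddCommGroup M] [Module R M] : Ideal R :=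
  ⨆ f : M →ₗ[R] R, LinearMap.range f

/-- The conductor `c = R :_{Q(R)} R̄` of the integral closure `R̄` of `R` in its
total quotient ring, viewed as an ideal of `R`. -/
noncomputable def conductorIdeal : Ideal R :=
  Submodule.comap (Algebra.linearMap R (Localization R⁰))
    ((1 : Submodule R (Localization R⁰)) /
      Subalgebra.toSubmodule (integralClosure R (Localization R⁰)))

/-- `ω` is a canonical ideal of the one-dimensional Cohen–Macaulay local ring
`R`: it is a regular ideal and every regular ideal (i.e. every maximal
Cohen–Macaulay ideal) is reflexive with respect to `ω`, meaning the natural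
evaluation map `I → Hom_R(Hom_R(I,ω),ω)` is bijective. -/
def IsCanonicalIdeal (ω : Ideal R) : Prop :=
  (∃ x ∈ ω, x ∈ R⁰) ∧
    ∀ I : Ideal R, (∃ x ∈ I, x ∈ R⁰) →
      Function.Bijective ((LinearMap.id : (I →ₗ[R] ω) →ₗ[R] (I →ₗ[R] ω)).flip)

open Submodule

noncomputable section TraceConductorAux
variable {R : Type*} [CommRing R]
local notation "Q" => Localization R⁰
local notation "L" => Algebra.linearMap R (Q)

/-- image of an ideal in the total quotient ring -/
noncomputable def jmap' (I : Ideal R) : Submodule R (Q) := Submodule.map (L) I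
noncomputable def Rbar' : Submodule R (Q) := Subalgebra.toSubmodule (integralClosure R (Q))
noncomputable def C' : Submodule R (Q) := 1 / Rbar' (R := R)

theorem Linj' : Function.Injective (L) := IsLocalization.injective (Q) (le_refl R⁰)

theorem isUnit_L {x : R} (hx : x ∈ R⁰) : IsUnit ((L) x) :=
  IsLocalization.map_units (Q) ⟨x, hx⟩

theorem jmap_le_one (I : Ideal R) : jmap' (R := R) I ≤ 1 := by
  rw [Submodule.one_eq_range]
  rintro x ⟨y, -, rfl⟩
  exact ⟨y, rfl⟩

theorem jmap_mul' (I J : Ideal R) : jmap' (R := R) (I * J) = jmap' I * jmap' J := by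
  have := Submodule.map_mul I J (Algebra.ofId R (Q))
  exact this

theorem comap_jmap (I : Ideal R) : Submodule.comap (L) (jmap' (R := R) I) = I := by
  ext x
  simp only [Submodule.mem_comap, jmap', Submodule.mem_map]
  exact ⟨fun ⟨y, hy, h⟩ => by rwa [← Linj' h], fun h => ⟨x, h, rfl⟩⟩

theorem jmap_comap {M : Submodule R (Q)} (hM : M ≤ 1) :
    jmap' (R := R) (Submodule.comap (L) M) = M := by
  ext x
  simp only [jmap', Submodule.mem_map, Submodule.mem_comap]
  constructor
  · rintro ⟨y, hy, rfl⟩; exact hy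
  · intro hx
    have h1 := hM hx
    rw [Submodule.one_eq_range] at h1
    obtain ⟨y, rfl⟩ := h1
    exact ⟨y, hx, rfl⟩

noncomputable def jequiv' (I : Ideal R) : I ≃ₗ[R] jmap' (R := R) I :=
  Submodule.equivMapOfInjective (L) Linj' I

end TraceConductorAux

section UnitMul
variable {R : Type*} [CommRing R] {A : Type*} [CommRing A] [Algebra R A]

theorem map_mulLeft_eq (q : A) (M : Submodule R A) :
    Submodule.map (LinearMap.mulLeft R q) M = span R {q} * M := by
  ext x
  rw [Submodule.mem_span_singleton_mul]
  constructor
  · rintro ⟨y, hy, rfl⟩; exact ⟨y, hy, rfl⟩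
  · rintro ⟨y, hy, rfl⟩; exact ⟨y, hy, rfl⟩

theorem mem_spanMul_iff {q : A} (hq : IsUnit q) {M : Submodule R A} {x : A} :
    x ∈ span R {q} * M ↔ (hq.unit⁻¹ : Aˣ) * x ∈ M := by
  rw [Submodule.mem_span_singleton_mul]
  constructor
  · rintro ⟨z, hz, rfl⟩
    have : ((hq.unit⁻¹ : Aˣ) : A) * (q * z) = z := by
      rw [← mul_assoc]
      simp [IsUnit.val_inv_mul]
    rwa [this]
  · intro h
    refine ⟨(hq.unit⁻¹ : Aˣ) * x, h, ?_⟩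
    rw [← mul_assoc]
    have : q * ((hq.unit⁻¹ : Aˣ) : A) = 1 := by simp [IsUnit.mul_val_inv]
    rw [this, one_mul]

theorem spanMul_spanMul (q p : A) (M : Submodule R A) :
    span R {q} * (span R {p} * M) = span R {q * p} * M := by
  rw [← mul_assoc, Submodule.span_mul_span, Set.singleton_mul_singleton]

/-- Multiplication by a unit as a linear automorphism. -/
noncomputable def mulLeftEquiv {q : A} (hq : IsUnit q) : A ≃ₗ[R] A :=
  LinearEquiv.ofLinear (LinearMap.mulLeft R q) (LinearMap.mulLeft R ((hq.unit⁻¹ : Aˣ) : A))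
    (by ext x; simp [← mul_assoc, IsUnit.mul_val_inv])
    (by ext x; simp [← mul_assoc, IsUnit.val_inv_mul])

/-- A submodule is isomorphic to its multiple by a unit. -/
noncomputable def spanMulEquiv {q : A} (hq : IsUnit q) (M : Submodule R A) :
    M ≃ₗ[R] (span R {q} * M : Submodule R A) :=
  (Submodule.equivMapOfInjective (mulLeftEquiv (R := R) hq).toLinearMap
    (mulLeftEquiv (R := R) hq).injective M).trans
    (LinearEquiv.ofEq _ _ (map_mulLeft_eq q M))

end UnitMul

noncomputable section TraceConductorAux2
variable {R : Type*} [CommRing R]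
local notation "Q" => Localization R⁰
local notation "L" => Algebra.linearMap R (Q)

/-- Every linear map from a submodule of `Q` containing a unit into `Q` is given by
multiplication by an element of `Q`. -/
theorem exists_multiplier {M : Submodule R (Q)} {u : Q} (hu : IsUnit u) (hM : u ∈ M)
    (f : M →ₗ[R] (Q)) : ∃ q : Q, ∀ x (hx : x ∈ M), (f ⟨x, hx⟩ : Q) = q * x := by
  set φ := algebraMap R (Q) with hφ
  refine ⟨((hu.unit⁻¹ : (Q)ˣ) : Q) * f ⟨u, hM⟩, ?_⟩
  intro x hx
  obtain ⟨⟨a, s⟩, hxs⟩ := IsLocalization.surj (M := R⁰) (S := Q) x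
  obtain ⟨⟨b, t⟩, hut⟩ := IsLocalization.surj (M := R⁰) (S := Q) u
  simp only [← hφ] at hxs hut
  have hLs : IsUnit (φ (s : R)) := IsLocalization.map_units (Q) s
  have hLt : IsUnit (φ (t : R)) := IsLocalization.map_units (Q) t
  have hLb : IsUnit (φ b) := by
    rw [show φ b = u * φ (t : R) from hut.symm]
    exact hu.mul hLt
  have key : ((b * (s : R)) • x : Q) = ((a * (t : R)) • u : Q) := by
    rw [Algebra.smul_def, Algebra.smul_def, ← hφ, map_mul, map_mul]
    calc φ b * φ (s:R) * x = φ b * (x * φ (s:R)) := by ring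
    _ = φ b * φ a := by rw [hxs]
    _ = φ a * (u * φ (t:R)) := by rw [hut]; ring
    _ = φ a * φ (t:R) * u := by ring
  have keyM : ((b * (s : R)) • (⟨x, hx⟩ : M)) = ((a * (t : R)) • (⟨u, hM⟩ : M)) := by
    ext; simpa using key
  have hf := congrArg (fun z => (f z : Q)) keyM
  simp only [map_smul] at hf
  rw [Algebra.smul_def, Algebra.smul_def, ← hφ] at hf
  have hbs : IsUnit (φ (b * (s : R))) := by rw [map_mul]; exact hLb.mul hLs
  apply hbs.mul_left_cancel
  rw [hf]
  have h1 : ((hu.unit⁻¹ : (Q)ˣ) : Q) * φ b = φ (t : R) := by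
    rw [show φ b = u * φ (t : R) from hut.symm, ← mul_assoc]
    simp [IsUnit.val_inv_mul]
  rw [map_mul, map_mul]
  calc φ a * φ (t:R) * (f ⟨u, hM⟩ : Q)
      = ((hu.unit⁻¹ : (Q)ˣ) : Q) * φ b * (x * φ (s:R)) * (f ⟨u, hM⟩ : Q) := by
        rw [h1, hxs]; ring
    _ = φ b * φ (s:R) * (((hu.unit⁻¹ : (Q)ˣ) : Q) * (f ⟨u, hM⟩ : Q) * x) := by ring

end TraceConductorAux2

noncomputable section P3
variable {R : Type*} [CommRing R]
local notation "Q" => Localization R⁰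
local notation "L" => Algebra.linearMap R (Q)

theorem mem_jmap {I : Ideal R} {i : R} (hi : i ∈ I) : (L) i ∈ jmap' I := ⟨i, hi, rfl⟩

theorem jequiv'_symm_apply {I : Ideal R} {i : R} (hi : i ∈ I) (h : (L) i ∈ jmap' I) :
    (jequiv' I).symm ⟨(L) i, h⟩ = ⟨i, hi⟩ := by
  rw [LinearEquiv.symm_apply_eq]
  exact Subtype.ext rfl

/-- Multiplier for a linear map from a regular ideal into `Q`. -/
theorem exists_multiplier_ideal {I : Ideal R} (hI : ∃ u ∈ I, u ∈ R⁰)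
    (f : I →ₗ[R] (Q)) : ∃ q : Q, ∀ i (hi : i ∈ I), f ⟨i, hi⟩ = q * (L) i := by
  obtain ⟨u, huI, hu⟩ := hI
  have hLu : IsUnit ((L) u) := IsLocalization.map_units (Q) ⟨u, hu⟩
  obtain ⟨q, hq⟩ := exists_multiplier hLu (mem_jmap huI)
    (f.comp (jequiv' I).symm.toLinearMap)
  refine ⟨q, fun i hi => ?_⟩
  have := hq ((L) i) (mem_jmap hi)
  rwa [LinearMap.comp_apply, LinearEquiv.coe_toLinearMap, jequiv'_symm_apply hi] at this

theorem multiplier_unique {I : Ideal R} (hI : ∃ u ∈ I, u ∈ R⁰) {q q' : Q}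
    (h : ∀ i ∈ I, q * (L) i = q' * (L) i) : q = q' := by
  obtain ⟨u, huI, hu⟩ := hI
  have hLu : IsUnit ((L) u) := IsLocalization.map_units (Q) ⟨u, hu⟩
  have := h u huI
  rw [mul_comm q, mul_comm q'] at this
  exact hLu.mul_left_cancel this

end P3

noncomputable section P4
variable {R : Type*} [CommRing R]
local notation "Q" => Localization R⁰
local notation "L" => Algebra.linearMap R (Q)

noncomputable def multOf {I : Ideal R} (hI : ∃ u ∈ I, u ∈ R⁰) (f : I →ₗ[R] R) :
    Localization R⁰ :=
  Classical.choose (exists_multiplier_ideal hI ((Algebra.linearMap R (Localization R⁰)).comp f))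

theorem multOf_spec {I : Ideal R} (hI : ∃ u ∈ I, u ∈ R⁰) (f : I →ₗ[R] R)
    {i : R} (hi : i ∈ I) :
    (Algebra.linearMap R (Localization R⁰)) (f ⟨i, hi⟩) =
      multOf hI f * (Algebra.linearMap R (Localization R⁰)) i :=
  Classical.choose_spec
    (exists_multiplier_ideal hI ((Algebra.linearMap R (Localization R⁰)).comp f)) i hi

theorem multOf_mem {I : Ideal R} (hI : ∃ u ∈ I, u ∈ R⁰) (f : I →ₗ[R] R) :
    multOf hI f ∈ ((1 : Submodule R (Localization R⁰)) / jmap' I) := by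
  rw [Submodule.mem_div_iff_forall_mul_mem]
  rintro y ⟨i, hi, rfl⟩
  rw [Submodule.one_eq_range, ← multOf_spec hI f hi]
  exact ⟨f ⟨i, hi⟩, rfl⟩

/-- `Hom_R(I, R)` is isomorphic to the fractional ideal `(R : I)` in the total
quotient ring `Q`. -/
noncomputable def homEquivOneDiv {I : Ideal R} (hI : ∃ u ∈ I, u ∈ R⁰) :
    (I →ₗ[R] R) ≃ₗ[R] ((1 : Submodule R (Localization R⁰)) / jmap' I :
      Submodule R (Localization R⁰)) where
  toFun f := ⟨multOf hI f, multOf_mem hI f⟩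
  map_add' f g := by
    ext
    refine multiplier_unique hI (q := multOf hI (f + g)) fun i hi => ?_
    rw [← multOf_spec hI (f + g) hi]
    push_cast
    rw [add_mul, ← multOf_spec hI f hi, ← multOf_spec hI g hi]
    simp
  map_smul' r f := by
    ext
    refine multiplier_unique hI (q := multOf hI (r • f)) fun i hi => ?_
    rw [← multOf_spec hI (r • f) hi]
    push_cast
    rw [Algebra.smul_def, mul_assoc, ← multOf_spec hI f hi]
    simp [Algebra.smul_def]
  invFun q :=
    (LinearEquiv.ofInjective _ Linj').symm.toLinearMap.comp
      (LinearMap.codRestrict (LinearMap.range (Algebra.linearMap R (Localization R⁰)))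
        ((LinearMap.mulLeft R (q : Localization R⁰)).comp
          ((Algebra.linearMap R (Localization R⁰)).comp I.subtype))
        (by
          rintro ⟨i, hi⟩
          have := q.2
          rw [Submodule.mem_div_iff_forall_mul_mem] at this
          have h2 := this _ (mem_jmap hi)
          rw [Submodule.mem_one] at h2
          obtain ⟨y, hy⟩ := h2
          exact ⟨y, hy⟩))
  left_inv f := by
    ext ⟨i, hi⟩
    apply Linj'
    simp only [LinearMap.comp_apply, LinearEquiv.coe_toLinearMap]
    rw [show (Algebra.linearMap R (Localization R⁰)) (((LinearEquiv.ofInjective _ Linj').symm) _)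
        = _ from congrArg Subtype.val ((LinearEquiv.ofInjective _ Linj').apply_symm_apply _)]
    exact (multOf_spec hI f hi).symm
  right_inv q := by
    ext
    refine multiplier_unique hI fun i hi => ?_
    rw [← multOf_spec hI _ hi]
    simp only [LinearMap.comp_apply, LinearEquiv.coe_toLinearMap]
    rw [show (Algebra.linearMap R (Localization R⁰)) (((LinearEquiv.ofInjective _ Linj').symm) _)
        = _ from congrArg Subtype.val ((LinearEquiv.ofInjective _ Linj').apply_symm_apply _)]
    rfl

end P4

noncomputable section P5
variable {R : Type*} [CommRing R]
local notation "Q" => Localization R⁰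
local notation "L" => Algebra.linearMap R (Q)

theorem exists_spanMul_of_equiv {M N : Submodule R (Q)} (hM : ∃ u ∈ M, IsUnit u)
    (hN : ∃ u ∈ N, IsUnit u) (e : M ≃ₗ[R] N) :
    ∃ q : Q, IsUnit q ∧ span R {q} * M = N := by
  obtain ⟨u, huM, hu⟩ := hM
  obtain ⟨v, hvN, hv⟩ := hN
  obtain ⟨q, hq⟩ := exists_multiplier hu huM (N.subtype.comp e.toLinearMap)
  have hq' : ∀ x (hx : x ∈ M), (e ⟨x, hx⟩ : Q) = q * x := hq
  have hqu : IsUnit q := by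
    have h1 : v = q * ((e.symm ⟨v, hvN⟩ : M) : Q) := by
      have := hq' _ (e.symm ⟨v, hvN⟩).2
      simp only [Subtype.coe_eta, LinearEquiv.apply_symm_apply] at this
      exact this
    exact isUnit_of_mul_isUnit_left (h1 ▸ hv)
  refine ⟨q, hqu, ?_⟩
  ext x
  rw [Submodule.mem_span_singleton_mul]
  constructor
  · rintro ⟨z, hz, rfl⟩
    rw [← hq' z hz]
    exact (e ⟨z, hz⟩).2
  · intro hx
    refine ⟨(e.symm ⟨x, hx⟩ : Q), (e.symm ⟨x, hx⟩).2, ?_⟩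
    have := hq' _ (e.symm ⟨x, hx⟩).2
    simp only [Subtype.coe_eta, LinearEquiv.apply_symm_apply] at this
    exact this.symm

theorem fg_of_le' {A : Type*} [CommRing A] [Algebra R A] [IsNoetherianRing R]
    {M N : Submodule R A} (h : M ≤ N) (hN : N.FG) : M.FG := by
  have : Module.Finite R N := Module.Finite.iff_fg.mpr hN
  have hnoeth : IsNoetherian R N := isNoetherian_of_isNoetherianRing_of_finite R N
  have hM : M = Submodule.map N.subtype (Submodule.comap N.subtype M) := by
    rw [Submodule.map_comap_eq, Submodule.range_subtype, inf_eq_right.mpr h]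
  rw [hM]
  exact Submodule.FG.map _ (IsNoetherian.noetherian _)

theorem mem_one_mul {A : Type*} [CommRing A] [Algebra R A] {x y : A}
    (hx : x ∈ (1 : Submodule R A)) (hy : y ∈ (1 : Submodule R A)) :
    x * y ∈ (1 : Submodule R A) := by
  rw [Submodule.mem_one] at hx hy ⊢
  obtain ⟨a, rfl⟩ := hx; obtain ⟨b, rfl⟩ := hy
  exact ⟨a * b, by rw [map_mul]⟩
end P5

noncomputable section P6
variable {R : Type*} [CommRing R]
local notation "Q" => Localization R⁰
local notation "L" => Algebra.linearMap R (Q)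

theorem mem_spanMul_iff' {q : Q} (hq : IsUnit q) {M : Submodule R (Q)} {x : Q} :
    x ∈ span R {q} * M ↔ ((hq.unit⁻¹ : (Q)ˣ) : Q) * x ∈ M := by
  rw [Submodule.mem_span_singleton_mul]
  constructor
  · rintro ⟨z, hz, rfl⟩
    have : ((hq.unit⁻¹ : (Q)ˣ) : Q) * (q * z) = z := by
      rw [← mul_assoc]; simp [IsUnit.val_inv_mul]
    rwa [this]
  · intro h
    refine ⟨((hq.unit⁻¹ : (Q)ˣ) : Q) * x, h, ?_⟩
    rw [← mul_assoc]
    have : q * ((hq.unit⁻¹ : (Q)ˣ) : Q) = 1 := by simp [IsUnit.mul_val_inv]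
    rw [this, one_mul]

theorem jmap_span (a : R) : jmap' (Ideal.span {a}) = span R {(L) a} := by
  unfold jmap'
  rw [Ideal.span, Submodule.map_span, Set.image_singleton]

/-- The key integrality lemma: if `a` is a principal reduction of the regular ideal `K`,
then `K ⊆ a • R̄` inside the total quotient ring. -/
theorem jmap_le_spanMul_Rbar [IsNoetherianRing R] {K : Ideal R} {a : R} (haK : a ∈ K)
    (ha : a ∈ R⁰) {n : ℕ} (hred : Ideal.span {a} * K ^ n = K ^ (n + 1)) :
    jmap' K ≤ span R {(L) a} * Rbar' (R := R) := by
  have hLa : IsUnit ((L) a) := IsLocalization.map_units (Q) ⟨a, ha⟩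
  rintro _ ⟨k, hk, rfl⟩
  rw [mem_spanMul_iff' hLa]
  set t : Q := ((hLa.unit⁻¹ : (Q)ˣ) : Q) * (L) k with ht
  -- `t` stabilizes M := jmap (K^n)
  set M : Submodule R (Q) := jmap' (K ^ n) with hM
  have hstab : ∀ x ∈ M, t * x ∈ M := by
    rintro _ ⟨y, hy, rfl⟩
    have hy' : y ∈ K ^ n := hy
    have h1 : k * y ∈ Ideal.span {a} * K ^ n := by
      rw [hred, pow_succ, mul_comm k y]
      exact Ideal.mul_mem_mul hy' hk
    have h2 : (L) (k * y) ∈ span R {(L) a} * M := by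
      rw [← jmap_span, ← jmap_mul']
      exact ⟨k * y, h1, rfl⟩
    rw [mem_spanMul_iff' hLa] at h2
    have : t * (L) y = ((hLa.unit⁻¹ : (Q)ˣ) : Q) * (L) (k * y) := by
      rw [ht]; simp only [Algebra.linearMap_apply, map_mul]; ring
    rwa [this]
  -- powers of `t` multiplied into L (a^n) stay in M
  have hpow : ∀ m : ℕ, t ^ m * (L) (a ^ n) ∈ M := by
    intro m
    induction m with
    | zero =>
        rw [pow_zero, one_mul]
        exact ⟨a ^ n, Ideal.pow_mem_pow haK n, rfl⟩
    | succ m ih =>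
        have := hstab _ ih
        rwa [pow_succ, show t ^ m * t * (L) (a ^ n) = t * (t ^ m * (L) (a ^ n)) by ring]
  have hLan : IsUnit ((L) (a ^ n)) := IsLocalization.map_units (Q) ⟨a ^ n, pow_mem ha n⟩
  set N' : Submodule R (Q) := span R {((hLan.unit⁻¹ : (Q)ˣ) : Q)} * M with hN'
  have hpow' : ∀ m : ℕ, t ^ m ∈ N' := by
    intro m
    rw [hN', Submodule.mem_span_singleton_mul]
    exact ⟨t ^ m * (L) (a ^ n), hpow m, by
      rw [← mul_assoc, mul_comm _ (t ^ m), mul_assoc]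
      simp [IsUnit.mul_val_inv]⟩
  have hadj : Subalgebra.toSubmodule (Algebra.adjoin R {t}) ≤ N' := by
    rw [Algebra.adjoin_eq_span, Submodule.span_le]
    intro z hz
    obtain ⟨m, rfl⟩ := Submonoid.mem_closure_singleton.mp hz
    exact hpow' m
  have hNfg : N'.FG := by
    refine Submodule.FG.mul (Submodule.fg_span_singleton _) ?_
    exact Submodule.FG.map _ (IsNoetherian.noetherian _)
  have hint : IsIntegral R t :=
    IsIntegral.of_mem_of_fg (Algebra.adjoin R {t}) (fg_of_le' hadj hNfg) t
      (Algebra.self_mem_adjoin_singleton R t)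
  exact hint

end P6

noncomputable section P7
variable {R : Type*} [CommRing R]
local notation "Q" => Localization R⁰
local notation "L" => Algebra.linearMap R (Q)

theorem one_le_Rbar : (1 : Submodule R (Q)) ≤ Rbar' (R := R) := by
  intro x hx
  rw [Submodule.mem_one] at hx
  obtain ⟨y, rfl⟩ := hx
  exact (integralClosure R (Q)).algebraMap_mem y

theorem Rbar_mul_Rbar : Rbar' (R := R) * Rbar' (R := R) = Rbar' (R := R) := by
  apply le_antisymm
  · rw [Submodule.mul_le]
    intro x hx y hy
    exact (Subalgebra.mem_toSubmodule _).mpr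
      (mul_mem ((Subalgebra.mem_toSubmodule _).mp hx) ((Subalgebra.mem_toSubmodule _).mp hy))
  · intro x hx
    simpa using (Submodule.mul_mem_mul hx
      ((Subalgebra.mem_toSubmodule _).mpr (integralClosure R (Q)).one_mem) :
        x * 1 ∈ Rbar' (R := R) * Rbar' (R := R))

theorem C_le_one : C' (R := R) ≤ 1 := by
  intro x hx
  rw [C', Submodule.mem_div_iff_forall_mul_mem] at hx
  simpa using hx 1 ((integralClosure R (Q)).one_mem)

theorem Rbar_mul_C : Rbar' (R := R) * C' (R := R) = C' (R := R) := by
  apply le_antisymm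
  · rw [Submodule.mul_le]
    intro u hu x hx
    rw [C', Submodule.mem_div_iff_forall_mul_mem] at hx ⊢
    intro y hy
    rw [show u * x * y = x * (u * y) by ring]
    exact hx _ ((Subalgebra.mem_toSubmodule _).mpr
      (mul_mem ((Subalgebra.mem_toSubmodule _).mp hu) ((Subalgebra.mem_toSubmodule _).mp hy)))
  · intro x hx
    simpa using (Submodule.mul_mem_mul
      ((Subalgebra.mem_toSubmodule _).mpr (integralClosure R (Q)).one_mem) hx :
        1 * x ∈ Rbar' (R := R) * C' (R := R))

theorem stable_le_C {X : Submodule R (Q)} (h1 : X ≤ 1)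
    (h2 : Rbar' (R := R) * X ≤ X) : X ≤ C' (R := R) := by
  intro x hx
  rw [C', Submodule.mem_div_iff_forall_mul_mem]
  intro y hy
  exact h1 (h2 (mul_comm x y ▸ Submodule.mul_mem_mul hy hx))

theorem exists_unit_C (hfin : Module.Finite R (integralClosure R (Q))) :
    ∃ s : R, s ∈ R⁰ ∧ (L) s ∈ C' (R := R) := by
  classical
  have hfinM : Module.Finite R (Rbar' (R := R)) := hfin
  have hfg : (Rbar' (R := R)).FG := Module.Finite.iff_fg.mp hfinM
  obtain ⟨T, hT⟩ := hfg
  set den : Q → R⁰ := fun q => (IsLocalization.surj (M := R⁰) (S := Q) q).choose.2 with hden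
  have hdenspec : ∀ q : Q, q * (L) ((den q : R⁰) : R) =
      (L) (IsLocalization.surj (M := R⁰) (S := Q) q).choose.1 := fun q =>
    (IsLocalization.surj (M := R⁰) (S := Q) q).choose_spec
  set s : R⁰ := ∏ q ∈ T, den q with hs
  have hkey : ∀ x ∈ Rbar' (R := R), (L) ((s : R⁰) : R) * x ∈ (1 : Submodule R (Q)) := by
    have hle : Rbar' (R := R) ≤
        Submodule.comap (LinearMap.mulLeft R ((L) ((s : R⁰) : R))) 1 := by
      rw [← hT, Submodule.span_le]
      intro q hq
      simp only [SetLike.mem_coe, Submodule.mem_comap, LinearMap.mulLeft_apply]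
      have hsplit : (s : R) = ((den q : R⁰) : R) * ((∏ p ∈ T.erase q, den p : R⁰) : R) := by
        rw [hs]
        norm_cast
        rw [Finset.mul_prod_erase T den hq]
      rw [hsplit]
      simp only [Algebra.linearMap_apply, map_mul]
      rw [show (algebraMap R (Q)) ((den q : R⁰) : R) *
          (algebraMap R (Q)) ((∏ p ∈ T.erase q, den p : R⁰) : R) * q =
          (q * (algebraMap R (Q)) ((den q : R⁰) : R)) *
          (algebraMap R (Q)) ((∏ p ∈ T.erase q, den p : R⁰) : R) by ring]
      have := hdenspec q
      simp only [Algebra.linearMap_apply] at this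
      rw [this, ← map_mul]
      exact Submodule.mem_one.mpr ⟨_, rfl⟩
    intro x hx
    exact hle hx
  refine ⟨((s : R⁰) : R), s.2, ?_⟩
  rw [C', Submodule.mem_div_iff_forall_mul_mem]
  exact hkey

end P7
noncomputable section P8
variable {R : Type*} [CommRing R]
local notation "Q" => Localization R⁰
local notation "L" => Algebra.linearMap R (Q)

theorem jmap_trace {I : Ideal R} (hI : ∃ u ∈ I, u ∈ R⁰) :
    jmap' (traceIdeal R I) = (1 / jmap' I) * jmap' I := by
  apply le_antisymm
  · show Submodule.map (L) _ ≤ _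
    rw [traceIdeal, Submodule.map_iSup]
    apply iSup_le
    intro f
    rintro _ ⟨r, ⟨⟨i, hi⟩, rfl⟩, rfl⟩
    rw [multOf_spec hI f hi]
    exact Submodule.mul_mem_mul (multOf_mem hI f) (mem_jmap hi)
  · rw [Submodule.mul_le]
    rintro q hq _ ⟨i, hi, rfl⟩
    set f := (homEquivOneDiv hI).symm ⟨q, hq⟩ with hfdef
    have hf : multOf hI f = q := congrArg Subtype.val ((homEquivOneDiv hI).apply_symm_apply ⟨q, hq⟩)
    have h1 : q * (L) i = (L) (f ⟨i, hi⟩) := by rw [multOf_spec hI f hi, hf]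
    rw [h1]
    refine ⟨f ⟨i, hi⟩, ?_, rfl⟩
    exact (le_iSup (fun g : ↥I →ₗ[R] R => LinearMap.range g) f) ⟨⟨i, hi⟩, rfl⟩

theorem div_spanMul (u : (Q)ˣ) (M N : Submodule R (Q)) :
    M / (span R {(u : Q)} * N) = span R {((u⁻¹ : (Q)ˣ) : Q)} * (M / N) := by
  ext x
  constructor
  · intro hx
    rw [Submodule.mem_div_iff_forall_mul_mem] at hx
    rw [Submodule.mem_span_singleton_mul]
    refine ⟨(u : Q) * x, ?_, by rw [← mul_assoc]; simp⟩
    rw [Submodule.mem_div_iff_forall_mul_mem]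
    intro y hy
    rw [show (u : Q) * x * y = x * ((u : Q) * y) by ring]
    exact hx _ (Submodule.mem_span_singleton_mul.mpr ⟨y, hy, rfl⟩)
  · intro hx
    rw [Submodule.mem_span_singleton_mul] at hx
    obtain ⟨z, hz, rfl⟩ := hx
    rw [Submodule.mem_div_iff_forall_mul_mem]
    intro y hy
    rw [Submodule.mem_span_singleton_mul] at hy
    obtain ⟨w, hw, rfl⟩ := hy
    rw [Submodule.mem_div_iff_forall_mul_mem] at hz
    rw [show ((u⁻¹ : (Q)ˣ) : Q) * z * ((u : Q) * w) = z * w * (((u⁻¹ : (Q)ˣ) : Q) * (u : Q)) by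
      ring]
    simp only [Units.inv_mul, mul_one]
    exact hz w hw

theorem spanMul_cancel (u : (Q)ˣ) (M : Submodule R (Q)) :
    span R {(u : Q)} * (span R {((u⁻¹ : (Q)ˣ) : Q)} * M) = M := by
  rw [spanMul_spanMul, Units.mul_inv, ← Submodule.one_eq_span, one_mul]

theorem Lval_jequiv_symm {I : Ideal R} {z : Q} (h : z ∈ jmap' I) :
    (L) ((((jequiv' I).symm ⟨z, h⟩ : ↥I)) : R) = z := by
  calc (L) (((jequiv' I).symm ⟨z, h⟩ : ↥I) : R)
      = (((jequiv' I) ((jequiv' I).symm ⟨z, h⟩)) : Q) :=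
        (Submodule.coe_equivMapOfInjective_apply _ Linj' I _).symm
    _ = z := by rw [LinearEquiv.apply_symm_apply]

noncomputable def multOfQ {I : Ideal R} (hI : ∃ u ∈ I, u ∈ R⁰) (f : ↥I →ₗ[R] (Q)) : Q :=
  Classical.choose (exists_multiplier_ideal hI f)

theorem multOfQ_spec {I : Ideal R} (hI : ∃ u ∈ I, u ∈ R⁰) (f : ↥I →ₗ[R] (Q)) {i : R}
    (hi : i ∈ I) : f ⟨i, hi⟩ = multOfQ hI f * (L) i :=
  Classical.choose_spec (exists_multiplier_ideal hI f) i hi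

theorem multOfQ_unique {I : Ideal R} (hI : ∃ u ∈ I, u ∈ R⁰) (f : ↥I →ₗ[R] (Q)) {q : Q}
    (h : ∀ i (hi : i ∈ I), f ⟨i, hi⟩ = q * (L) i) : multOfQ hI f = q :=
  multiplier_unique hI fun i hi => by rw [← multOfQ_spec hI f hi, h i hi]

end P8
noncomputable section P9
variable {R : Type*} [CommRing R]
local notation "Q" => Localization R⁰
local notation "L" => Algebra.linearMap R (Q)

/-- The multiplier of a linear map between two ideals, as a linear map. -/
noncomputable def multHom {K : Ideal R} (hK : ∃ u ∈ K, u ∈ R⁰) (B : Ideal R) :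
    (↥K →ₗ[R] ↥B) →ₗ[R] (Q) where
  toFun f := multOfQ hK (((Algebra.linearMap R (Q)).comp B.subtype).comp f)
  map_add' f g := by
    refine multOfQ_unique hK _ fun i hi => ?_
    have h1 := multOfQ_spec hK (((Algebra.linearMap R (Q)).comp B.subtype).comp f) hi
    have h2 := multOfQ_spec hK (((Algebra.linearMap R (Q)).comp B.subtype).comp g) hi
    simp only [LinearMap.comp_apply] at h1 h2
    simp only [LinearMap.comp_apply, LinearMap.add_apply, Submodule.coe_add, map_add, h1, h2]
    ring
  map_smul' r f := by
    refine multOfQ_unique hK _ fun i hi => ?_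
    have h1 := multOfQ_spec hK (((Algebra.linearMap R (Q)).comp B.subtype).comp f) hi
    simp only [LinearMap.comp_apply] at h1
    simp only [LinearMap.comp_apply, LinearMap.smul_apply, SetLike.val_smul, map_smul,
      RingHom.id_apply, h1]
    rw [smul_mul_assoc]

theorem multHom_spec {K : Ideal R} (hK : ∃ u ∈ K, u ∈ R⁰) {B : Ideal R}
    (f : ↥K →ₗ[R] ↥B) {i : R} (hi : i ∈ K) :
    (L) ((f ⟨i, hi⟩ : ↥B) : R) = multHom hK B f * (L) i :=
  multOfQ_spec hK (((Algebra.linearMap R (Q)).comp B.subtype).comp f) hi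

theorem multHom_mem {K : Ideal R} (hK : ∃ u ∈ K, u ∈ R⁰) {B : Ideal R}
    (f : ↥K →ₗ[R] ↥B) : multHom hK B f ∈ jmap' B / jmap' K := by
  rw [Submodule.mem_div_iff_forall_mul_mem]
  rintro _ ⟨i, hi, rfl⟩
  rw [← multHom_spec hK f hi]
  exact mem_jmap (f ⟨i, hi⟩).2

/-- The linear map between two ideals given by multiplication by `q`. -/
noncomputable def homOfMult {K B : Ideal R} {q : Q} (hq : q ∈ jmap' B / jmap' K) :
    ↥K →ₗ[R] ↥B :=
  (jequiv' B).symm.toLinearMap.comp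
    (LinearMap.codRestrict (jmap' B)
      ((LinearMap.mulLeft R q).comp ((Algebra.linearMap R (Q)).comp K.subtype))
      (fun v => by
        rw [Submodule.mem_div_iff_forall_mul_mem] at hq
        exact hq _ (mem_jmap v.2)))

theorem homOfMult_spec {K B : Ideal R} {q : Q} (hq : q ∈ jmap' B / jmap' K)
    {i : R} (hi : i ∈ K) : (L) ((homOfMult hq ⟨i, hi⟩ : ↥B) : R) = q * (L) i :=
  Lval_jequiv_symm _

end P9
noncomputable section P10
variable {R : Type*} [CommRing R]
local notation "Q" => Localization R⁰
local notation "L" => Algebra.linearMap R (Q)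

theorem W_div_W {ω : Ideal R} (hω : IsCanonicalIdeal R ω) :
    jmap' ω / jmap' ω = (1 : Submodule R (Q)) := by
  obtain ⟨w₀, hw₀ω, hw₀⟩ := hω.1
  apply le_antisymm
  · intro q hq
    rw [Submodule.mem_div_iff_forall_mul_mem] at hq
    set E : ↥ω →ₗ[R] ↥ω :=
      (jequiv' ω).symm.toLinearMap.comp
        (LinearMap.codRestrict (jmap' ω)
          ((LinearMap.mulLeft R q).comp ((Algebra.linearMap R (Q)).comp ω.subtype))
          (fun v => hq _ (mem_jmap v.2))) with hEdef
    have hE : ∀ w (hw : w ∈ ω), (L) ((E ⟨w, hw⟩ : ↥ω) : R) = q * (L) w := by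
      intro w hw
      exact Lval_jequiv_symm _
    obtain ⟨hinj, hsurj⟩ := hω.2 ⊤ ⟨1, trivial, one_mem R⁰⟩
    obtain ⟨x, hx⟩ := hsurj (E.comp
      ((LinearMap.id : ((⊤ : Ideal R) →ₗ[R] ↥ω) →ₗ[R] _).flip ⟨1, trivial⟩))
    have hkey : ∀ w (hw : w ∈ ω), (L) ((x : R) * w) = q * (L) w := by
      intro w hw
      set f : ↥(⊤ : Ideal R) →ₗ[R] ↥ω :=
        (LinearMap.toSpanSingleton R ↥ω ⟨w, hw⟩).comp (Submodule.subtype ⊤) with hfdef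
      have happ := congrArg (fun F => F f) hx
      simp only [LinearMap.comp_apply] at happ
      have h1 : ((LinearMap.id : ((⊤ : Ideal R) →ₗ[R] ↥ω) →ₗ[R] _).flip x) f = f x := rfl
      have h2 : ((LinearMap.id : ((⊤ : Ideal R) →ₗ[R] ↥ω) →ₗ[R] _).flip ⟨1, trivial⟩) f
          = f ⟨1, trivial⟩ := rfl
      rw [h1, h2] at happ
      have h3 : f x = ((x : R) • (⟨w, hw⟩ : ↥ω)) := rfl
      have h4 : f ⟨1, trivial⟩ = ((1 : R) • (⟨w, hw⟩ : ↥ω)) := rfl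
      rw [h3, h4, one_smul] at happ
      have h5 := congrArg (fun v : ↥ω => (L) ((v : ↥ω) : R)) happ
      rw [SetLike.val_smul, smul_eq_mul] at h5
      rw [h5]
      exact hE w hw
    have hq1 : q = (L) (x : R) := by
      have h1 := hkey w₀ hw₀ω
      have h2 : (L) ((x : R)) * (L) w₀ = q * (L) w₀ := by
        rw [← h1]
        simp only [Algebra.linearMap_apply, ← map_mul]
      have h3 : (L) w₀ * (L) (x : R) = (L) w₀ * q := by
        rw [mul_comm ((L) w₀), mul_comm ((L) w₀)]; exact h2
      exact ((isUnit_L hw₀).mul_left_cancel h3).symm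
    exact Submodule.mem_one.mpr ⟨x, hq1.symm⟩
  · intro y hy
    rw [Submodule.mem_one] at hy
    obtain ⟨r, rfl⟩ := hy
    rw [Submodule.mem_div_iff_forall_mul_mem]
    rintro _ ⟨w, hw, rfl⟩
    exact ⟨r * w, Ideal.mul_mem_left ω r hw, by simp [map_mul]⟩

end P10
noncomputable section P11
variable {R : Type*} [CommRing R]
local notation "Q" => Localization R⁰
local notation "L" => Algebra.linearMap R (Q)

theorem W_le_W_div {ω K : Ideal R} : jmap' ω ≤ jmap' ω / jmap' (R := R) K := by
  rintro _ ⟨w', hw', rfl⟩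
  rw [Submodule.mem_div_iff_forall_mul_mem]
  rintro _ ⟨k, hk, rfl⟩
  exact ⟨w' * k, Ideal.mul_mem_right k ω hw', by simp [map_mul]⟩

theorem W_bidual {ω : Ideal R} (hω : IsCanonicalIdeal R ω) {K : Ideal R}
    (hK : ∃ u ∈ K, u ∈ R⁰) :
    jmap' ω / (jmap' ω / jmap' K) = jmap' K := by
  obtain ⟨w₀, hw₀ω, hw₀⟩ := hω.1
  apply le_antisymm
  · intro x hx
    rw [Submodule.mem_div_iff_forall_mul_mem] at hx
    have hxmem : ∀ f : ↥K →ₗ[R] ↥ω, x * multHom hK ω f ∈ jmap' ω := fun f =>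
      hx _ (multHom_mem hK f)
    set G : (↥K →ₗ[R] ↥ω) →ₗ[R] ↥ω :=
      (jequiv' ω).symm.toLinearMap.comp
        (LinearMap.codRestrict (jmap' ω) ((LinearMap.mulLeft R x).comp (multHom hK ω))
          (fun f => hxmem f)) with hGdef
    obtain ⟨hinj, hsurj⟩ := hω.2 K hK
    obtain ⟨kk, hkk⟩ := hsurj G
    have hkey : ∀ q (hq : q ∈ jmap' ω / jmap' K), q * (L) (kk : R) = x * q := by
      intro q hq
      set f := homOfMult hq with hfdef
      have happ := congrArg (fun F => F f) hkk
      have h1 : ((LinearMap.id : (↥K →ₗ[R] ↥ω) →ₗ[R] _).flip kk) f = f kk := rfl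
      rw [h1] at happ
      have h5 := congrArg (fun v : ↥ω => (L) ((v : ↥ω) : R)) happ
      have h6 : (L) ((f kk : ↥ω) : R) = q * (L) (kk : R) := homOfMult_spec hq kk.2
      have h7 : (L) ((G f : ↥ω) : R) = x * multHom hK ω f := Lval_jequiv_symm _
      have h8 : multHom hK ω f = q := multOfQ_unique hK _ (fun i hi => by
        have := homOfMult_spec hq hi
        simpa using this)
      rw [h6, h7, h8] at h5
      exact h5
    have hWle : jmap' ω ≤ jmap' ω / jmap' K := W_le_W_div
    have hu := isUnit_L hw₀
    have h9 := hkey ((L) w₀) (hWle (mem_jmap hw₀ω))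
    have h10 : (L) w₀ * (L) (kk : R) = (L) w₀ * x := by rw [h9, mul_comm]
    have h11 : (L) (kk : R) = x := hu.mul_left_cancel h10
    rw [← h11]
    exact mem_jmap kk.2
  · intro y hy
    rw [Submodule.mem_div_iff_forall_mul_mem]
    intro z hz
    rw [Submodule.mem_div_iff_forall_mul_mem] at hz
    rw [mul_comm]
    exact hz y hy

theorem W_div_JW {ω : Ideal R} (hω1 : jmap' ω / jmap' ω = (1 : Submodule R (Q)))
    (I : Ideal R) : jmap' ω / (jmap' I * jmap' ω) = 1 / jmap' I := by
  apply le_antisymm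
  · intro x hx
    rw [Submodule.mem_div_iff_forall_mul_mem] at hx ⊢
    rintro _ ⟨i, hi, rfl⟩
    rw [← hω1, Submodule.mem_div_iff_forall_mul_mem]
    intro w hw
    rw [mul_assoc]
    exact hx _ (Submodule.mul_mem_mul (mem_jmap hi) hw)
  · intro x hx
    rw [Submodule.mem_div_iff_forall_mul_mem] at hx ⊢
    intro z hz
    refine Submodule.mul_induction_on hz ?_ ?_
    · rintro _ ⟨i, hi, rfl⟩ w hw
      have hx1 := hx _ (mem_jmap hi)
      rw [Submodule.mem_one] at hx1
      obtain ⟨r, hr⟩ := hx1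
      rw [show x * ((L) i * w) = (x * (L) i) * w by ring, ← hr]
      rw [show (algebraMap R (Q)) r * w = r • w from (Algebra.smul_def r w).symm]
      exact Submodule.smul_mem _ r hw
    · intro a b ha hb
      rw [mul_add]
      exact Submodule.add_mem _ ha hb

end P11
noncomputable section P12
variable {R : Type*} [CommRing R]
local notation "Q" => Localization R⁰
local notation "L" => Algebra.linearMap R (Q)

theorem spanMul_cancel' (u : (Q)ˣ) (M : Submodule R (Q)) :
    span R {((u⁻¹ : (Q)ˣ) : Q)} * (span R {(u : Q)} * M) = M := by
  rw [spanMul_spanMul, Units.inv_mul, ← Submodule.one_eq_span, one_mul]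

theorem spanMul_cancel2 {q : Q} (hq : IsUnit q) (M : Submodule R (Q)) :
    span R {((hq.unit⁻¹ : (Q)ˣ) : Q)} * (span R {q} * M) = M := by
  rw [spanMul_spanMul, IsUnit.val_inv_mul, ← Submodule.one_eq_span, one_mul]

theorem spanMul_cancel3 {q : Q} (hq : IsUnit q) (M : Submodule R (Q)) :
    span R {q} * (span R {((hq.unit⁻¹ : (Q)ˣ) : Q)} * M) = M := by
  rw [spanMul_spanMul, IsUnit.mul_val_inv, ← Submodule.one_eq_span, one_mul]

theorem reg_of_isUnit_L {r : R} (h : IsUnit ((L) r)) : r ∈ R⁰ := by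
  rw [mem_nonZeroDivisors_iff_right]
  intro z hz
  apply Linj'
  have : (L) z * (L) r = 0 := by
    simp only [Algebra.linearMap_apply, ← map_mul]
    rw [show z * r = 0 from hz]
    exact map_zero _
  have h2 : (L) z = 0 := by
    have h3 := congrArg (fun w => w * ((h.unit⁻¹ : (Q)ˣ) : Q)) this
    simpa [mul_assoc, IsUnit.mul_val_inv] using h3
  rw [h2, map_zero]

theorem jmap_conductor : jmap' (conductorIdeal R) = C' (R := R) :=
  jmap_comap C_le_one

/-- Every ideal of `R` (viewed in `Q`) which is stable under multiplication by `R̄`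
and contains a unit is a cyclic `R̄`-module. -/
theorem stable_eq_spanMul [IsNoetherianRing R]
    (hpr : ∀ K : Ideal R, (∃ x ∈ K, x ∈ R⁰) →
      ∃ x ∈ K, x ∈ R⁰ ∧ ∃ n : ℕ, Ideal.span {x} * K ^ n = K ^ (n + 1))
    {X : Submodule R (Q)} (hX1 : X ≤ 1) (hstab : Rbar' (R := R) * X ≤ X)
    (hu : ∃ r : R, r ∈ R⁰ ∧ (L) r ∈ X) :
    ∃ a : R, a ∈ R⁰ ∧ X = span R {(L) a} * Rbar' (R := R) := by
  obtain ⟨r, hr, hrX⟩ := hu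
  set K : Ideal R := Submodule.comap (L) X with hK
  have hjK : jmap' K = X := jmap_comap hX1
  obtain ⟨a, haK, ha, n, hred⟩ := hpr K ⟨r, hrX, hr⟩
  refine ⟨a, ha, le_antisymm ?_ ?_⟩
  · rw [← hjK]
    exact jmap_le_spanMul_Rbar haK ha hred
  · have h1 : span R {(L) a} ≤ X := by
      rw [Submodule.span_le, Set.singleton_subset_iff]
      exact haK
    calc span R {(L) a} * Rbar' (R := R) ≤ X * Rbar' (R := R) :=
          mul_le_mul_left h1 _
      _ = Rbar' (R := R) * X := mul_comm _ _
      _ ≤ X := hstab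

theorem conductor_eq_spanMul [IsNoetherianRing R]
    (hfin : Module.Finite R (integralClosure R (Q)))
    (hpr : ∀ K : Ideal R, (∃ x ∈ K, x ∈ R⁰) →
      ∃ x ∈ K, x ∈ R⁰ ∧ ∃ n : ℕ, Ideal.span {x} * K ^ n = K ^ (n + 1)) :
    ∃ a : R, a ∈ R⁰ ∧ C' (R := R) = span R {(L) a} * Rbar' (R := R) := by
  obtain ⟨s, hs, hsC⟩ := exists_unit_C hfin
  exact stable_eq_spanMul hpr C_le_one (le_of_eq Rbar_mul_C) ⟨s, hs, hsC⟩

/-- `c K = a c` for a principal reduction `a` of the regular ideal `K`. -/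
theorem C_mul_jmap [IsNoetherianRing R] {K : Ideal R} {a : R} (haK : a ∈ K)
    (ha : a ∈ R⁰) {n : ℕ} (hred : Ideal.span {a} * K ^ n = K ^ (n + 1)) :
    C' (R := R) * jmap' K = span R {(L) a} * C' (R := R) := by
  apply le_antisymm
  · calc C' (R := R) * jmap' K
        ≤ C' (R := R) * (span R {(L) a} * Rbar' (R := R)) :=
          mul_le_mul_right (jmap_le_spanMul_Rbar haK ha hred) _
      _ = span R {(L) a} * (Rbar' (R := R) * C' (R := R)) := by ring
      _ = span R {(L) a} * C' (R := R) := by rw [Rbar_mul_C]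
  · have h1 : span R {(L) a} ≤ jmap' K := by
      rw [Submodule.span_le, Set.singleton_subset_iff]
      exact mem_jmap haK
    calc span R {(L) a} * C' (R := R) ≤ jmap' K * C' (R := R) :=
          mul_le_mul_left h1 _
      _ = C' (R := R) * jmap' K := mul_comm _ _

/-- `(1/a) c ⊆ (R : K)` and hence `c ⊆ tr(K)`. -/
theorem spanInvMul_C_le_one_div [IsNoetherianRing R] {K : Ideal R} {a : R} (haK : a ∈ K)
    (ha : a ∈ R⁰) {n : ℕ} (hred : Ideal.span {a} * K ^ n = K ^ (n + 1)) :
    span R {(((isUnit_L ha).unit⁻¹ : (Q)ˣ) : Q)} * C' (R := R) ≤ 1 / jmap' K := by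
  rw [Submodule.le_div_iff_mul_le]
  have : span R {(((isUnit_L ha).unit⁻¹ : (Q)ˣ) : Q)} * C' (R := R) * jmap' K
      = span R {(((isUnit_L ha).unit⁻¹ : (Q)ˣ) : Q)} * (span R {(L) a} * C' (R := R)) := by
    rw [mul_assoc, C_mul_jmap haK ha hred]
  rw [this, spanMul_cancel2 (isUnit_L ha)]
  exact C_le_one

theorem C_le_T [IsNoetherianRing R] {K : Ideal R} {a : R} (haK : a ∈ K)
    (ha : a ∈ R⁰) {n : ℕ} (hred : Ideal.span {a} * K ^ n = K ^ (n + 1)) :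
    C' (R := R) ≤ (1 / jmap' K) * jmap' K := by
  have h2 : span R {(((isUnit_L ha).unit⁻¹ : (Q)ˣ) : Q)} * C' (R := R) * jmap' K
      = C' (R := R) := by
    rw [mul_assoc, C_mul_jmap haK ha hred, spanMul_cancel2 (isUnit_L ha)]
  calc C' (R := R) = span R {(((isUnit_L ha).unit⁻¹ : (Q)ˣ) : Q)} * C' (R := R) * jmap' K :=
        h2.symm
    _ ≤ (1 / jmap' K) * jmap' K :=
        mul_le_mul_left (spanInvMul_C_le_one_div haK ha hred) _

end P12
noncomputable section P13
variable {R : Type*} [CommRing R]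
local notation "Q" => Localization R⁰
local notation "L" => Algebra.linearMap R (Q)

theorem one_div_eq_of_T_eq_C [IsNoetherianRing R] {K : Ideal R} {a : R} (haK : a ∈ K)
    (ha : a ∈ R⁰) {n : ℕ} (hred : Ideal.span {a} * K ^ n = K ^ (n + 1))
    (hT : (1 / jmap' K) * jmap' K = C' (R := R)) :
    1 / jmap' (R := R) K = span R {(((isUnit_L ha).unit⁻¹ : (Q)ˣ) : Q)} * C' (R := R) := by
  apply le_antisymm
  · intro x hx
    rw [Submodule.mem_span_singleton_mul]
    refine ⟨(L) a * x, ?_, by rw [← mul_assoc]; simp [IsUnit.val_inv_mul]⟩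
    rw [C', Submodule.mem_div_iff_forall_mul_mem]
    intro y hy
    have hxa : x * (L) a ∈ C' (R := R) := by
      rw [← hT]
      exact Submodule.mul_mem_mul hx (mem_jmap haK)
    rw [C', Submodule.mem_div_iff_forall_mul_mem] at hxa
    rw [show (L) a * x * y = x * (L) a * y by ring]
    exact hxa y hy
  · exact spanInvMul_C_le_one_div haK ha hred

theorem T_eq_C_of_spanMul [IsNoetherianRing R] {K : Ideal R} {a : R} (haK : a ∈ K)
    (ha : a ∈ R⁰) {n : ℕ} (hred : Ideal.span {a} * K ^ n = K ^ (n + 1))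
    {p : Q} (hp : IsUnit p) (h : span R {p} * (1 / jmap' K) = C' (R := R)) :
    (1 / jmap' K) * jmap' K = C' (R := R) := by
  have h1 : 1 / jmap' (R := R) K = span R {((hp.unit⁻¹ : (Q)ˣ) : Q)} * C' (R := R) := by
    rw [← h, spanMul_cancel2]
  have hT : (1 / jmap' (R := R) K) * jmap' K
      = span R {((hp.unit⁻¹ : (Q)ˣ) : Q)} * (span R {(L) a} * C' (R := R)) := by
    calc (1 / jmap' (R := R) K) * jmap' K
        = (span R {((hp.unit⁻¹ : (Q)ˣ) : Q)} * C' (R := R)) * jmap' K := by rw [← h1]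
      _ = span R {((hp.unit⁻¹ : (Q)ˣ) : Q)} * (C' (R := R) * jmap' K) := by rw [mul_assoc]
      _ = span R {((hp.unit⁻¹ : (Q)ˣ) : Q)} * (span R {(L) a} * C' (R := R)) := by
          rw [C_mul_jmap haK ha hred]
  have hle1 : (1 / jmap' (R := R) K) * jmap' K ≤ 1 := by
    rw [mul_comm]; exact Submodule.mul_one_div_le_one
  have hstab : Rbar' (R := R) * ((1 / jmap' (R := R) K) * jmap' K)
      ≤ (1 / jmap' (R := R) K) * jmap' K := by
    rw [hT]
    have : Rbar' (R := R) * (span R {((hp.unit⁻¹ : (Q)ˣ) : Q)} * (span R {(L) a} * C' (R := R)))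
        = span R {((hp.unit⁻¹ : (Q)ˣ) : Q)} * (span R {(L) a} * (Rbar' (R := R) * C' (R := R))) := by
      ring
    rw [this, Rbar_mul_C]
  exact le_antisymm (stable_le_C hle1 hstab) (C_le_T haK ha hred)

theorem W_le_W_div_C {ω : Ideal R} : jmap' ω ≤ jmap' (R := R) ω / C' (R := R) := by
  rintro _ ⟨w, hw, rfl⟩
  rw [Submodule.mem_div_iff_forall_mul_mem]
  intro y hy
  have hy1 := C_le_one hy
  rw [Submodule.mem_one] at hy1
  obtain ⟨r, rfl⟩ := hy1
  exact ⟨w * r, Ideal.mul_mem_right r ω hw, by simp [map_mul]⟩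

theorem Rbar_mul_W_div_C {ω : Ideal R} :
    Rbar' (R := R) * (jmap' ω / C' (R := R)) ≤ jmap' (R := R) ω / C' (R := R) := by
  rw [Submodule.mul_le]
  intro u hu x hx
  rw [Submodule.mem_div_iff_forall_mul_mem] at hx ⊢
  intro y hy
  have huy : u * y ∈ C' (R := R) := by
    rw [← Rbar_mul_C]
    exact Submodule.mul_mem_mul hu hy
  rw [show u * x * y = x * (u * y) by ring]
  exact hx _ huy

theorem WdivC_eq [IsNoetherianRing R]
    (hfin : Module.Finite R (integralClosure R (Q)))
    (hpr : ∀ K : Ideal R, (∃ x ∈ K, x ∈ R⁰) →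
      ∃ x ∈ K, x ∈ R⁰ ∧ ∃ n : ℕ, Ideal.span {x} * K ^ n = K ^ (n + 1))
    {ω : Ideal R} (hω : IsCanonicalIdeal R ω) :
    ∃ e : Q, IsUnit e ∧ jmap' (R := R) ω / C' (R := R) = span R {e} * C' (R := R) := by
  obtain ⟨c₀, hc₀, hC⟩ := conductor_eq_spanMul hfin hpr
  have hγ : IsUnit ((L) c₀) := isUnit_L hc₀
  have hγC : (L) c₀ ∈ C' (R := R) := by
    rw [hC, Submodule.mem_span_singleton_mul]
    exact ⟨1, (Subalgebra.mem_toSubmodule _).mpr (integralClosure R (Q)).one_mem, mul_one _⟩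
  obtain ⟨w₀, hw₀ω, hw₀⟩ := hω.1
  set X : Submodule R (Q) := span R {(L) c₀} * (jmap' ω / C' (R := R)) with hXdef
  have hX1 : X ≤ 1 := by
    have h1 : span R {(L) c₀} ≤ C' (R := R) := by
      rw [Submodule.span_le, Set.singleton_subset_iff]; exact hγC
    calc X ≤ C' (R := R) * (jmap' ω / C' (R := R)) := mul_le_mul_left h1 _
      _ = (jmap' ω / C' (R := R)) * C' (R := R) := mul_comm _ _
      _ ≤ jmap' ω := Submodule.le_div_iff_mul_le.mp le_rfl
      _ ≤ 1 := jmap_le_one ω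
  have hstab : Rbar' (R := R) * X ≤ X := by
    have : Rbar' (R := R) * X = span R {(L) c₀} * (Rbar' (R := R) * (jmap' ω / C' (R := R))) := by
      rw [hXdef]; ring
    rw [this]
    exact mul_le_mul_right Rbar_mul_W_div_C _
  have hu : ∃ r : R, r ∈ R⁰ ∧ (L) r ∈ X := by
    refine ⟨c₀ * w₀, mul_mem hc₀ hw₀, ?_⟩
    rw [Submodule.mem_span_singleton_mul]
    refine ⟨(L) w₀, W_le_W_div_C (mem_jmap hw₀ω), by simp [map_mul]⟩
  obtain ⟨d, hd, hX⟩ := stable_eq_spanMul hpr hX1 hstab hu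
  have hRbar : Rbar' (R := R) = span R {((hγ.unit⁻¹ : (Q)ˣ) : Q)} * C' (R := R) := by
    rw [hC, spanMul_cancel2]
  refine ⟨((hγ.unit⁻¹ : (Q)ˣ) : Q) * ((L) d * ((hγ.unit⁻¹ : (Q)ˣ) : Q)), ?_, ?_⟩
  · exact (hγ.unit⁻¹ : (Q)ˣ).isUnit.mul ((isUnit_L hd).mul (hγ.unit⁻¹ : (Q)ˣ).isUnit)
  · have h2 : jmap' (R := R) ω / C' (R := R)
        = span R {((hγ.unit⁻¹ : (Q)ˣ) : Q)} * X := by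
      rw [hXdef, spanMul_cancel2]
    rw [h2, hX, hRbar, spanMul_spanMul, spanMul_spanMul, mul_assoc]

end P13
noncomputable section P14
variable {R : Type*} [CommRing R]
local notation "Q" => Localization R⁰
local notation "L" => Algebra.linearMap R (Q)

theorem jmap_inj {I J : Ideal R} (h : jmap' (R := R) I = jmap' J) : I = J := by
  rw [← comap_jmap (R := R) I, h, comap_jmap]

theorem iso_c_iff {X : Type*} [AddCommGroup X] [Module R X] {M : Submodule R (Q)}
    (eX : X ≃ₗ[R] M) (hM : ∃ u ∈ M, IsUnit u) (hC : ∃ u ∈ C' (R := R), IsUnit u) :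
    Nonempty (X ≃ₗ[R] ↥(conductorIdeal R)) ↔
      ∃ p : Q, IsUnit p ∧ span R {p} * M = C' (R := R) := by
  have ec : ↥(conductorIdeal R) ≃ₗ[R] ↥(C' (R := R)) :=
    (jequiv' _).trans (LinearEquiv.ofEq _ _ jmap_conductor)
  constructor
  · rintro ⟨e⟩
    exact exists_spanMul_of_equiv hM hC (eX.symm.trans (e.trans ec))
  · rintro ⟨p, hp, hpM⟩
    exact ⟨eX.trans ((spanMulEquiv hp M).trans
      ((LinearEquiv.ofEq _ _ hpM).trans ec.symm))⟩

theorem main_general [IsNoetherianRing R]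
    (hfin : Module.Finite R (integralClosure R (Q)))
    (hpr : ∀ K : Ideal R, (∃ x ∈ K, x ∈ R⁰) →
      ∃ x ∈ K, x ∈ R⁰ ∧ ∃ n : ℕ, Ideal.span {x} * K ^ n = K ^ (n + 1))
    {ω : Ideal R} (hω : IsCanonicalIdeal R ω)
    {I : Ideal R} (hreg : ∃ x ∈ I, x ∈ R⁰) :
    ((traceIdeal R ↥I = conductorIdeal R) ↔
        Nonempty ((↥I →ₗ[R] R) ≃ₗ[R] ↥(conductorIdeal R))) ∧
      (Nonempty ((↥I →ₗ[R] R) ≃ₗ[R] ↥(conductorIdeal R)) ↔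
        Nonempty (↥(I * ω) ≃ₗ[R] ↥(conductorIdeal R))) := by
  obtain ⟨a, haI, ha, n, hred⟩ := hpr I hreg
  have hLa := isUnit_L ha
  obtain ⟨c₀, hc₀, hCeq⟩ := conductor_eq_spanMul hfin hpr
  have hγ := isUnit_L hc₀
  have hγC : (L) c₀ ∈ C' (R := R) := by
    rw [hCeq, Submodule.mem_span_singleton_mul]
    exact ⟨1, (Subalgebra.mem_toSubmodule _).mpr (integralClosure R (Q)).one_mem, mul_one _⟩
  have hC : ∃ u ∈ C' (R := R), IsUnit u := ⟨(L) c₀, hγC, hγ⟩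
  have h1J : ∃ u ∈ 1 / jmap' (R := R) I, IsUnit u :=
    ⟨((hLa.unit⁻¹ : (Q)ˣ) : Q) * (L) c₀,
      spanInvMul_C_le_one_div haI ha hred
        (Submodule.mem_span_singleton_mul.mpr ⟨(L) c₀, hγC, rfl⟩),
      (hLa.unit⁻¹ : (Q)ˣ).isUnit.mul hγ⟩
  have hω1 := W_div_W hω
  obtain ⟨e, he, hWC⟩ := WdivC_eq hfin hpr hω
  obtain ⟨w₀, hw₀ω, hw₀⟩ := hω.1
  have hIω : ∃ x ∈ I * ω, x ∈ R⁰ :=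
    ⟨a * w₀, Ideal.mul_mem_mul haI hw₀ω, mul_mem ha hw₀⟩
  have hJW1 : jmap' ω / (jmap' I * jmap' ω) = 1 / jmap' (R := R) I := W_div_JW hω1 I
  have hJW : jmap' I * jmap' ω = jmap' (R := R) ω / (1 / jmap' (R := R) I) := by
    have hb := W_bidual hω hIω
    rw [jmap_mul', hJW1] at hb
    exact hb.symm
  have hbridge : (∃ p : Q, IsUnit p ∧ span R {p} * (1 / jmap' (R := R) I) = C' (R := R)) ↔
      (∃ q : Q, IsUnit q ∧ span R {q} * (jmap' I * jmap' ω) = C' (R := R)) := by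
    constructor
    · rintro ⟨p, hp, hpEq⟩
      have h1 : 1 / jmap' (R := R) I = span R {((hp.unit⁻¹ : (Q)ˣ) : Q)} * C' (R := R) := by
        rw [← hpEq, spanMul_cancel2]
      have h2 : jmap' I * jmap' ω = span R {p} * (jmap' (R := R) ω / C' (R := R)) := by
        rw [hJW, h1, div_spanMul (hp.unit⁻¹), inv_inv, IsUnit.unit_spec]
      have h3 : jmap' I * jmap' ω = span R {p * e} * C' (R := R) := by
        rw [h2, hWC, spanMul_spanMul]
      refine ⟨(((hp.mul he).unit⁻¹ : (Q)ˣ) : Q), ((hp.mul he).unit⁻¹ : (Q)ˣ).isUnit, ?_⟩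
      rw [h3, spanMul_cancel2]
    · rintro ⟨q, hq, hqEq⟩
      have h1 : jmap' I * jmap' ω = span R {((hq.unit⁻¹ : (Q)ˣ) : Q)} * C' (R := R) := by
        rw [← hqEq, spanMul_cancel2]
      have h2 : 1 / jmap' (R := R) I = span R {q} * (jmap' (R := R) ω / C' (R := R)) := by
        rw [← hJW1, h1, div_spanMul (hq.unit⁻¹), inv_inv, IsUnit.unit_spec]
      have h3 : 1 / jmap' (R := R) I = span R {q * e} * C' (R := R) := by
        rw [h2, hWC, spanMul_spanMul]
      exact ⟨_, ((hq.mul he).unit⁻¹ : (Q)ˣ).isUnit, by rw [h3, spanMul_cancel2]⟩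
  have hpart1 : (traceIdeal R ↥I = conductorIdeal R) ↔
      ∃ p : Q, IsUnit p ∧ span R {p} * (1 / jmap' (R := R) I) = C' (R := R) := by
    constructor
    · intro h
      have hT : (1 / jmap' (R := R) I) * jmap' I = C' (R := R) := by
        rw [← jmap_trace hreg, h, jmap_conductor]
      have hdiv := one_div_eq_of_T_eq_C haI ha hred hT
      refine ⟨(L) a, hLa, ?_⟩
      rw [hdiv]
      exact spanMul_cancel3 hLa _
    · rintro ⟨p, hp, hpEq⟩
      have hT := T_eq_C_of_spanMul haI ha hred hp hpEq
      apply jmap_inj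
      rw [jmap_trace hreg, jmap_conductor, hT]
  have hisoHom : Nonempty ((↥I →ₗ[R] R) ≃ₗ[R] ↥(conductorIdeal R)) ↔
      ∃ p : Q, IsUnit p ∧ span R {p} * (1 / jmap' (R := R) I) = C' (R := R) :=
    iso_c_iff (homEquivOneDiv hreg) h1J hC
  have hisoJW : Nonempty (↥(I * ω) ≃ₗ[R] ↥(conductorIdeal R)) ↔
      ∃ q : Q, IsUnit q ∧ span R {q} * (jmap' I * jmap' ω) = C' (R := R) :=
    iso_c_iff ((jequiv' (I * ω)).trans (LinearEquiv.ofEq _ _ (jmap_mul' I ω)))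
      ⟨(L) a * (L) w₀, Submodule.mul_mem_mul (mem_jmap haI) (mem_jmap hw₀ω),
        hLa.mul (isUnit_L hw₀)⟩ hC
  exact ⟨hpart1.trans hisoHom.symm, hisoHom.trans (hbridge.trans hisoJW.symm)⟩

end P14

/-- Let `(R,m)` be a one-dimensional Cohen–Macaulay local ring whose integral
closure `R̄` is module-finite, with conductor `c`, and in which every regular
ideal has a principal reduction.  For a canonical ideal `ω` and a regular ideal
`I`:  `tr(I) = c` iff `I* ≅ c` iff `Iω ≅ c`; in particular `tr(ω) = c` iff
`ω² ≅ c`. -/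
theorem trace_eq_conductor_iff (R : Type*) [CommRing R] [IsLocalRing R]
    [IsNoetherianRing R]
    (hdim : ringKrullDim R = 1)
    (hCM : ∃ r ∈ maximalIdeal R, r ∈ R⁰)
    (hfin : Module.Finite R (integralClosure R (Localization R⁰)))
    (hpr : ∀ K : Ideal R, (∃ x ∈ K, x ∈ R⁰) →
      ∃ x ∈ K, x ∈ R⁰ ∧ ∃ n : ℕ, Ideal.span {x} * K ^ n = K ^ (n + 1))
    (ω : Ideal R) (hω : IsCanonicalIdeal R ω)
    (I : Ideal R) (hreg : ∃ x ∈ I, x ∈ R⁰) :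
    ((traceIdeal R I = conductorIdeal R) ↔
        Nonempty ((I →ₗ[R] R) ≃ₗ[R] conductorIdeal R)) ∧
      (Nonempty ((I →ₗ[R] R) ≃ₗ[R] conductorIdeal R) ↔
        Nonempty ((I * ω : Ideal R) ≃ₗ[R] conductorIdeal R)) ∧
      ((traceIdeal R ω = conductorIdeal R) ↔
        Nonempty ((ω * ω : Ideal R) ≃ₗ[R] conductorIdeal R)) := by
  have h1 := main_general (R := R) hfin hpr hω hreg
  have h2 := main_general (R := R) hfin hpr hω hω.1
  exact ⟨h1.1, h1.2, h2.1.trans h2.2⟩
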